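/- Let M = [0,1]² with the Euclidean metric, let k ≥ 2 be an integer with 3^{1/4}·√k > √2, let q_1, …, q_k be a farthest-point-insertion sequence in M with S_k = {q_1, …, q_k}, and let P ⊆ M be any k-point subset with gap ratio α = GR_P. Then GR_{S_k} ≤ ρ(k)·α, where ρ(k) = 27^{1/4}·√k / (3^{1/4}·√k − √2). -/

import Mathlib

open Metric

/-- Minimum gap of a point set `P`: half the least pairwise distance. -/
noncomputable def minGap {E : Type*} [MetricSpace E] (P : Set E) : ℝ :=
  sInf {d : ℝ | ∃ p ∈ P, ∃ q ∈ P, p ≠ q ∧ d = dist p q} / 2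

/-- Maximum gap of `P` over the space `X`: the covering radius of `P` in `X`. -/
noncomputable def maxGap {E : Type*} [MetricSpace E] (X P : Set E) : ℝ :=
  sSup ((fun q => Metric.infDist q P) '' X)

/-- Gap ratio of `P` over the space `X`. -/
noncomputable def gapRatio {E : Type*} [MetricSpace E] (X P : Set E) : ℝ :=
  maxGap X P / minGap P

/-- The unit square in the Euclidean plane. -/
def unitSquare : Set (EuclideanSpace ℝ (Fin 2)) :=
  {x | ∀ i, x i ∈ Set.Icc (0:ℝ) 1}

/-- The first `i` points of the sequence `q`. -/
def fpiPrefix {E : Type*} (q : ℕ → E) (i : ℕ) : Set E := q '' {j | j < i}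

/-- `q` is a farthest-point-insertion sequence of length `k` in the space `X`:
`q 0` and `q 1` realize the diameter of `X`, and each subsequent point is a
point of `X` farthest from the already chosen points. -/
def IsFPIOn {E : Type*} [MetricSpace E] (X : Set E) (k : ℕ) (q : ℕ → E) : Prop :=
  (∀ i < k, q i ∈ X) ∧
  dist (q 0) (q 1) = Metric.diam X ∧
  ∀ i, 2 ≤ i → i < k →
    Metric.infDist (q i) (fpiPrefix q i) = maxGap X (fpiPrefix q i)

abbrev E2 := EuclideanSpace ℝ (Fin 2)

lemma le_infDist' {s : Set E2} (hs : s.Nonempty) {x : E2} {b : ℝ}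
    (h : ∀ y ∈ s, b ≤ dist x y) : b ≤ infDist x s := by
  by_contra hlt
  push_neg at hlt
  obtain ⟨y, hy, hd⟩ := (infDist_lt_iff hs).1 hlt
  exact absurd (h y hy) (not_le.2 hd)

lemma dist_eq2 (x y : E2) : dist x y = Real.sqrt ((x 0 - y 0)^2 + (x 1 - y 1)^2) := by
  rw [EuclideanSpace.dist_eq, Fin.sum_univ_two]
  simp [Real.dist_eq, sq_abs]

lemma mem_unitSquare_iff (x : E2) : x ∈ unitSquare ↔ (0 ≤ x 0 ∧ x 0 ≤ 1) ∧ (0 ≤ x 1 ∧ x 1 ≤ 1) := by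
  constructor
  · intro h; exact ⟨⟨(h 0).1, (h 0).2⟩, ⟨(h 1).1, (h 1).2⟩⟩
  · rintro ⟨⟨a,b⟩,⟨c,d⟩⟩ i
    fin_cases i <;> exact ⟨by assumption, by assumption⟩

lemma dist_le_two {x y : E2} (hx : x ∈ unitSquare) (hy : y ∈ unitSquare) : dist x y ≤ 2 := by
  rw [dist_eq2]
  obtain ⟨⟨a1,a2⟩,⟨a3,a4⟩⟩ := (mem_unitSquare_iff x).1 hx
  obtain ⟨⟨b1,b2⟩,⟨b3,b4⟩⟩ := (mem_unitSquare_iff y).1 hy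
  have h : (x 0 - y 0)^2 + (x 1 - y 1)^2 ≤ 4 := by nlinarith
  calc Real.sqrt ((x 0 - y 0)^2 + (x 1 - y 1)^2) ≤ Real.sqrt 4 := Real.sqrt_le_sqrt h
    _ = 2 := by rw [show (4:ℝ) = 2^2 by norm_num, Real.sqrt_sq (by norm_num)]

lemma zero_mem_unitSquare : (!₂[0,0] : E2) ∈ unitSquare := by
  rw [mem_unitSquare_iff]; norm_num

lemma le_maxGap {P : Set E2} (hPne : P.Nonempty) (hPs : P ⊆ unitSquare)
    {z : E2} (hz : z ∈ unitSquare) : infDist z P ≤ maxGap unitSquare P := by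
  apply le_csSup
  · refine ⟨2, ?_⟩
    rintro v ⟨w, hw, rfl⟩
    obtain ⟨p0, hp0⟩ := hPne
    exact le_trans (infDist_le_dist_of_mem hp0) (dist_le_two hw (hPs hp0))
  · exact ⟨z, hz, rfl⟩

lemma maxGap_le {P : Set E2} {c : ℝ} (h : ∀ z ∈ unitSquare, infDist z P ≤ c) :
    maxGap unitSquare P ≤ c := by
  apply csSup_le
  · exact Set.Nonempty.image _ ⟨!₂[0,0], zero_mem_unitSquare⟩
  · rintro v ⟨w, hw, rfl⟩; exact h w hw

lemma maxGap_anti {S T : Set E2} (hST : S ⊆ T) (hS : S.Nonempty)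
    (hSs : S ⊆ unitSquare) : maxGap unitSquare T ≤ maxGap unitSquare S := by
  apply maxGap_le
  intro z hz
  exact le_trans (infDist_le_infDist_of_subset hST hS) (le_maxGap hS hSs hz)

set_option maxHeartbeats 1000000 in
lemma maxGap_pos {P : Set E2} (hfin : P.Finite) (hne : P.Nonempty)
    (hPs : P ⊆ unitSquare) : 0 < maxGap unitSquare P := by
  have hfin2 : ((fun v : E2 => v 0) '' P).Finite := hfin.image _
  obtain ⟨c, hc, hcnot⟩ :=
    ((Set.Icc_infinite (show (0:ℝ) < 1 by norm_num)).diff hfin2).nonempty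
  have hznot : (!₂[c, 0] : E2) ∉ P := by
    intro hmem
    exact hcnot ⟨!₂[c, 0], hmem, by simp⟩
  have hzsq : (!₂[c, 0] : E2) ∈ unitSquare := by
    rw [mem_unitSquare_iff]
    simp only [PiLp.toLp_apply, Matrix.cons_val_zero, Matrix.cons_val_one, Matrix.head_cons]
    exact ⟨⟨hc.1, hc.2⟩, ⟨le_refl 0, by norm_num⟩⟩
  obtain ⟨z, hz1, hz2⟩ : ∃ z : E2, z ∉ P ∧ z ∈ unitSquare := ⟨!₂[c, 0], hznot, hzsq⟩
  have hpos : 0 < infDist z P := (hfin.isClosed.notMem_iff_infDist_pos hne).1 hz1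
  exact lt_of_lt_of_le hpos (le_maxGap hne hPs hz2)

lemma minGap_spec {P : Set E2} (hfin : P.Finite) {p q : E2}
    (hp : p ∈ P) (hq : q ∈ P) (hne : p ≠ q) :
    (∃ a ∈ P, ∃ b ∈ P, a ≠ b ∧ dist a b = 2 * minGap P) ∧
    (∀ a ∈ P, ∀ b ∈ P, a ≠ b → 2 * minGap P ≤ dist a b) ∧ 0 < minGap P := by
  set D := {d : ℝ | ∃ p ∈ P, ∃ q ∈ P, p ≠ q ∧ d = dist p q} with hD
  have hDne : D.Nonempty := ⟨dist p q, p, hp, q, hq, hne, rfl⟩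
  have hDfin : D.Finite := by
    have hsub : D ⊆ (fun x : E2 × E2 => dist x.1 x.2) '' (P ×ˢ P) := by
      rintro d ⟨a, ha, b, hb, hab, rfl⟩
      exact ⟨(a, b), ⟨ha, hb⟩, rfl⟩
    exact ((hfin.prod hfin).image _).subset hsub
  have hmem : sInf D ∈ D := hDne.csInf_mem hDfin
  have h2 : 2 * minGap P = sInf D := by rw [minGap]; ring
  refine ⟨?_, ?_, ?_⟩
  · obtain ⟨a, ha, b, hb, hab, hd⟩ := hmem
    exact ⟨a, ha, b, hb, hab, by rw [h2, hd]⟩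
  · intro a ha b hb hab
    rw [h2]
    exact csInf_le hDfin.bddBelow ⟨a, ha, b, hb, hab, rfl⟩
  · obtain ⟨a, ha, b, hb, hab, hd⟩ := hmem
    have : 0 < sInf D := hd ▸ dist_pos.2 hab
    linarith [h2 ▸ this]

def pt (x y : ℝ) : E2 := !₂[x, y]

@[simp] lemma pt_apply0 (x y : ℝ) : pt x y 0 = x := rfl
@[simp] lemma pt_apply1 (x y : ℝ) : pt x y 1 = y := rfl

set_option maxHeartbeats 4000000 in
lemma choose_sign (s3 c u1 u2 m1 m2 : ℝ)
    (hs3 : 1 ≤ s3) (hc : 0 < c) (hsc : s3 * c = 1/2)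
    (h1 : -1 ≤ u1) (h2 : u1 ≤ 1) (h3 : -1 ≤ u2) (h4 : u2 ≤ 1)
    (hm1a : u1/2 ≤ m1) (hm1b : -u1/2 ≤ m1) (hm1c : m1 ≤ 1 - u1/2) (hm1d : m1 ≤ 1 + u1/2)
    (hm2a : u2/2 ≤ m2) (hm2b : -u2/2 ≤ m2) (hm2c : m2 ≤ 1 - u2/2) (hm2d : m2 ≤ 1 + u2/2) :
    ∃ σ : ℝ, σ^2 = 1 ∧ 0 ≤ m1 - σ*u2*c ∧ m1 - σ*u2*c ≤ 1 ∧
      0 ≤ m2 + σ*u1*c ∧ m2 + σ*u1*c ≤ 1 := by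
  have hc12 : c ≤ 1/2 := by nlinarith
  have hm10 : 0 ≤ m1 := by linarith
  have hm11 : m1 ≤ 1 := by linarith
  have hm20 : 0 ≤ m2 := by linarith
  have hm21 : m2 ≤ 1 := by linarith
  have hcle := hc.le
  rcases le_or_gt 0 u1 with s1 | s1 <;> rcases le_or_gt 0 u2 with s2 | s2
  · -- u1 sign 1, u2 sign 1
    have ks1 : 0 ≤ u1*c := mul_nonneg s1 hcle
    have ks2 : 0 ≤ u2*c := mul_nonneg s2 hcle
    by_cases hAB : u2 ≤ s3 * u1
    · have k1 := mul_le_mul_of_nonneg_right hAB hcle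
      have e1 : s3*u1*c = u1/2 := by linear_combination u1*hsc
      have kb : u1*c ≤ 1*c := mul_le_mul_of_nonneg_right (by linarith) hcle
      by_cases hsub : u1*c ≤ m2
      · exact ⟨(-1:ℝ), by norm_num, by linarith, by linarith, by linarith, by linarith⟩
      · push_neg at hsub
        exact ⟨(1:ℝ), by norm_num, by linarith, by linarith, by linarith, by linarith⟩
    · push_neg at hAB
      have f1 := mul_nonneg (show (0:ℝ) ≤ s3 - 1 by linarith) (show (0:ℝ) ≤ u1 by linarith)
      have f2 := mul_nonneg (show (0:ℝ) ≤ s3 - 1 by linarith) (show (0:ℝ) ≤ u2 by linarith)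
      have hBA : u1 ≤ s3 * u2 := by nlinarith
      have k1 := mul_le_mul_of_nonneg_right hBA hcle
      have e1 : s3*u2*c = u2/2 := by linear_combination u2*hsc
      have kb : u2*c ≤ 1*c := mul_le_mul_of_nonneg_right (by linarith) hcle
      by_cases hsub : u2*c ≤ m1
      · exact ⟨(1:ℝ), by norm_num, by linarith, by linarith, by linarith, by linarith⟩
      · push_neg at hsub
        exact ⟨(-1:ℝ), by norm_num, by linarith, by linarith, by linarith, by linarith⟩
  · -- u1 sign 1, u2 sign -1
    have ks1 : 0 ≤ u1*c := mul_nonneg s1 hcle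
    have ks2 : u2*c ≤ 0 := mul_nonpos_iff.2 (Or.inr ⟨s2.le, hcle⟩)
    by_cases hAB : (-u2) ≤ s3 * u1
    · have k1 := mul_le_mul_of_nonneg_right hAB hcle
      have e1 : s3*u1*c = u1/2 := by linear_combination u1*hsc
      have kb : u1*c ≤ 1*c := mul_le_mul_of_nonneg_right (by linarith) hcle
      by_cases hsub : u1*c ≤ m2
      · exact ⟨(-1:ℝ), by norm_num, by linarith, by linarith, by linarith, by linarith⟩
      · push_neg at hsub
        exact ⟨(1:ℝ), by norm_num, by linarith, by linarith, by linarith, by linarith⟩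
    · push_neg at hAB
      have f1 := mul_nonneg (show (0:ℝ) ≤ s3 - 1 by linarith) (show (0:ℝ) ≤ u1 by linarith)
      have f2 := mul_nonneg (show (0:ℝ) ≤ s3 - 1 by linarith) (show (0:ℝ) ≤ (-u2) by linarith)
      have hBA : u1 ≤ s3 * (-u2) := by nlinarith
      have k1 := mul_le_mul_of_nonneg_right hBA hcle
      have e1 : s3*u2*c = u2/2 := by linear_combination u2*hsc
      have kb : (-u2)*c ≤ 1*c := mul_le_mul_of_nonneg_right (by linarith) hcle
      by_cases hsub : (-u2)*c ≤ m1
      · exact ⟨(-1:ℝ), by norm_num, by linarith, by linarith, by linarith, by linarith⟩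
      · push_neg at hsub
        exact ⟨(1:ℝ), by norm_num, by linarith, by linarith, by linarith, by linarith⟩
  · -- u1 sign -1, u2 sign 1
    have ks1 : u1*c ≤ 0 := mul_nonpos_iff.2 (Or.inr ⟨s1.le, hcle⟩)
    have ks2 : 0 ≤ u2*c := mul_nonneg s2 hcle
    by_cases hAB : u2 ≤ s3 * (-u1)
    · have k1 := mul_le_mul_of_nonneg_right hAB hcle
      have e1 : s3*u1*c = u1/2 := by linear_combination u1*hsc
      have kb : (-u1)*c ≤ 1*c := mul_le_mul_of_nonneg_right (by linarith) hcle
      by_cases hsub : (-u1)*c ≤ m2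
      · exact ⟨(1:ℝ), by norm_num, by linarith, by linarith, by linarith, by linarith⟩
      · push_neg at hsub
        exact ⟨(-1:ℝ), by norm_num, by linarith, by linarith, by linarith, by linarith⟩
    · push_neg at hAB
      have f1 := mul_nonneg (show (0:ℝ) ≤ s3 - 1 by linarith) (show (0:ℝ) ≤ (-u1) by linarith)
      have f2 := mul_nonneg (show (0:ℝ) ≤ s3 - 1 by linarith) (show (0:ℝ) ≤ u2 by linarith)
      have hBA : (-u1) ≤ s3 * u2 := by nlinarith
      have k1 := mul_le_mul_of_nonneg_right hBA hcle
      have e1 : s3*u2*c = u2/2 := by linear_combination u2*hsc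
      have kb : u2*c ≤ 1*c := mul_le_mul_of_nonneg_right (by linarith) hcle
      by_cases hsub : u2*c ≤ m1
      · exact ⟨(1:ℝ), by norm_num, by linarith, by linarith, by linarith, by linarith⟩
      · push_neg at hsub
        exact ⟨(-1:ℝ), by norm_num, by linarith, by linarith, by linarith, by linarith⟩
  · -- u1 sign -1, u2 sign -1
    have ks1 : u1*c ≤ 0 := mul_nonpos_iff.2 (Or.inr ⟨s1.le, hcle⟩)
    have ks2 : u2*c ≤ 0 := mul_nonpos_iff.2 (Or.inr ⟨s2.le, hcle⟩)
    by_cases hAB : (-u2) ≤ s3 * (-u1)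
    · have k1 := mul_le_mul_of_nonneg_right hAB hcle
      have e1 : s3*u1*c = u1/2 := by linear_combination u1*hsc
      have kb : (-u1)*c ≤ 1*c := mul_le_mul_of_nonneg_right (by linarith) hcle
      by_cases hsub : (-u1)*c ≤ m2
      · exact ⟨(1:ℝ), by norm_num, by linarith, by linarith, by linarith, by linarith⟩
      · push_neg at hsub
        exact ⟨(-1:ℝ), by norm_num, by linarith, by linarith, by linarith, by linarith⟩
    · push_neg at hAB
      have f1 := mul_nonneg (show (0:ℝ) ≤ s3 - 1 by linarith) (show (0:ℝ) ≤ (-u1) by linarith)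
      have f2 := mul_nonneg (show (0:ℝ) ≤ s3 - 1 by linarith) (show (0:ℝ) ≤ (-u2) by linarith)
      have hBA : (-u1) ≤ s3 * (-u2) := by nlinarith
      have k1 := mul_le_mul_of_nonneg_right hBA hcle
      have e1 : s3*u2*c = u2/2 := by linear_combination u2*hsc
      have kb : (-u2)*c ≤ 1*c := mul_le_mul_of_nonneg_right (by linarith) hcle
      by_cases hsub : (-u2)*c ≤ m1
      · exact ⟨(-1:ℝ), by norm_num, by linarith, by linarith, by linarith, by linarith⟩
      · push_neg at hsub
        exact ⟨(1:ℝ), by norm_num, by linarith, by linarith, by linarith, by linarith⟩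


set_option maxHeartbeats 2000000 in
lemma deep_point {P : Set E2} (hPs : P ⊆ unitSquare) {p q : E2}
    (hp : p ∈ P) (hq : q ∈ P) (hpq : p ≠ q) {r : ℝ} (hr : 0 < r)
    (hd : dist p q = 2 * r)
    (hmin : ∀ a ∈ P, ∀ b ∈ P, a ≠ b → 2 * r ≤ dist a b) :
    ∃ z ∈ unitSquare, ∀ s ∈ P, 2 * r / Real.sqrt 3 ≤ dist z s := by
  have hs3sq : Real.sqrt 3 ^ 2 = 3 := Real.sq_sqrt (by norm_num)
  have hs30 : (0:ℝ) ≤ Real.sqrt 3 := Real.sqrt_nonneg 3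
  have hs31 : (1:ℝ) ≤ Real.sqrt 3 := by nlinarith
  have hs3pos : (0:ℝ) < Real.sqrt 3 := by linarith
  have hcpos : (0:ℝ) < 1 / (2 * Real.sqrt 3) := by positivity
  have hs3c : Real.sqrt 3 * (1 / (2 * Real.sqrt 3)) = 1 / 2 := by
    field_simp
  have hc2 : (1 / (2 * Real.sqrt 3)) ^ 2 = 1 / 12 := by
    rw [div_pow, mul_pow, hs3sq]; norm_num
  obtain ⟨⟨hp01, hp02⟩, hp11, hp12⟩ := (mem_unitSquare_iff p).1 (hPs hp)
  obtain ⟨⟨hq01, hq02⟩, hq11, hq12⟩ := (mem_unitSquare_iff q).1 (hPs hq)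
  have hu : (q 0 - p 0) ^ 2 + (q 1 - p 1) ^ 2 = 4 * r ^ 2 := by
    have h1 : dist p q ^ 2 = (p 0 - q 0) ^ 2 + (p 1 - q 1) ^ 2 := by
      rw [dist_eq2, Real.sq_sqrt (by positivity)]
    nlinarith [h1, hd]
  obtain ⟨σ, hσ, hm1l, hm1u, hm2l, hm2u⟩ :=
    choose_sign (Real.sqrt 3) (1 / (2 * Real.sqrt 3)) (q 0 - p 0) (q 1 - p 1)
      ((p 0 + q 0) / 2) ((p 1 + q 1) / 2)
      hs31 hcpos hs3c (by linarith) (by linarith) (by linarith) (by linarith)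
      (by linarith) (by linarith) (by linarith) (by linarith)
      (by linarith) (by linarith) (by linarith) (by linarith)
  refine ⟨pt ((p 0 + q 0) / 2 - σ * (q 1 - p 1) * (1 / (2 * Real.sqrt 3)))
            ((p 1 + q 1) / 2 + σ * (q 0 - p 0) * (1 / (2 * Real.sqrt 3))), ?_, ?_⟩
  · rw [mem_unitSquare_iff]
    simp only [pt_apply0, pt_apply1]
    exact ⟨⟨hm1l, hm1u⟩, hm2l, hm2u⟩
  · intro s hs
    have h12 : (2 * r / Real.sqrt 3) ^ 2 = 4 * r ^ 2 / 3 := by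
      rw [div_pow, hs3sq]; ring
    rcases eq_or_ne s p with hsp | hsp
    · rw [hsp, dist_eq2]
      simp only [pt_apply0, pt_apply1]
      have hinner : ((p 0 + q 0) / 2 - σ * (q 1 - p 1) * (1 / (2 * Real.sqrt 3)) - p 0) ^ 2 +
          ((p 1 + q 1) / 2 + σ * (q 0 - p 0) * (1 / (2 * Real.sqrt 3)) - p 1) ^ 2
          = (2 * r / Real.sqrt 3) ^ 2 := by
        rw [h12]
        linear_combination ((1 / (2 * Real.sqrt 3)) ^ 2 * ((q 0 - p 0) ^ 2 + (q 1 - p 1) ^ 2)) * hσ +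
          ((q 0 - p 0) ^ 2 + (q 1 - p 1) ^ 2) * hc2 + (1 / 3) * hu
      rw [hinner, Real.sqrt_sq (by positivity)]
    · rcases eq_or_ne s q with hsq | hsq
      · rw [hsq, dist_eq2]
        simp only [pt_apply0, pt_apply1]
        have hinner : ((p 0 + q 0) / 2 - σ * (q 1 - p 1) * (1 / (2 * Real.sqrt 3)) - q 0) ^ 2 +
            ((p 1 + q 1) / 2 + σ * (q 0 - p 0) * (1 / (2 * Real.sqrt 3)) - q 1) ^ 2
            = (2 * r / Real.sqrt 3) ^ 2 := by
          rw [h12]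
          linear_combination ((1 / (2 * Real.sqrt 3)) ^ 2 * ((q 0 - p 0) ^ 2 + (q 1 - p 1) ^ 2)) * hσ +
            ((q 0 - p 0) ^ 2 + (q 1 - p 1) ^ 2) * hc2 + (1 / 3) * hu
        rw [hinner, Real.sqrt_sq (by positivity)]
      · have hsp2 : 2 * r ≤ dist s p := hmin s hs p hp hsp
        have hsq2 : 2 * r ≤ dist s q := hmin s hs q hq hsq
        have hTp : dist s p ^ 2 = (s 0 - p 0) ^ 2 + (s 1 - p 1) ^ 2 := by
          rw [dist_eq2, Real.sq_sqrt (by positivity)]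
        have hTq : dist s q ^ 2 = (s 0 - q 0) ^ 2 + (s 1 - q 1) ^ 2 := by
          rw [dist_eq2, Real.sq_sqrt (by positivity)]
        have hsp3 : 4 * r ^ 2 ≤ (s 0 - p 0) ^ 2 + (s 1 - p 1) ^ 2 := by
          nlinarith [hsp2, hTp, hr, dist_nonneg (x := s) (y := p)]
        have hsq3 : 4 * r ^ 2 ≤ (s 0 - q 0) ^ 2 + (s 1 - q 1) ^ 2 := by
          nlinarith [hsq2, hTq, hr, dist_nonneg (x := s) (y := q)]
        have hid : (s 0 - p 0) ^ 2 + (s 1 - p 1) ^ 2 + ((s 0 - q 0) ^ 2 + (s 1 - q 1) ^ 2) =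
            2 * ((s 0 - (p 0 + q 0) / 2) ^ 2 + (s 1 - (p 1 + q 1) / 2) ^ 2) +
            ((q 0 - p 0) ^ 2 + (q 1 - p 1) ^ 2) / 2 := by ring
        have hm3 : 3 * r ^ 2 ≤ (s 0 - (p 0 + q 0) / 2) ^ 2 + (s 1 - (p 1 + q 1) / 2) ^ 2 := by
          linarith [hid, hsp3, hsq3, hu]
        have hsm : Real.sqrt 3 * r ≤ dist s (pt ((p 0 + q 0) / 2) ((p 1 + q 1) / 2)) := by
          rw [dist_eq2]
          simp only [pt_apply0, pt_apply1]
          have h1 : Real.sqrt 3 * r = Real.sqrt (3 * r ^ 2) := by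
            rw [show (3:ℝ) * r ^ 2 = (Real.sqrt 3 * r) ^ 2 by rw [mul_pow, hs3sq],
              Real.sqrt_sq (by positivity)]
          rw [h1]
          exact Real.sqrt_le_sqrt hm3
        have hmz : dist (pt ((p 0 + q 0) / 2) ((p 1 + q 1) / 2))
            (pt ((p 0 + q 0) / 2 - σ * (q 1 - p 1) * (1 / (2 * Real.sqrt 3)))
                ((p 1 + q 1) / 2 + σ * (q 0 - p 0) * (1 / (2 * Real.sqrt 3)))) = r / Real.sqrt 3 := by
          rw [dist_eq2]
          simp only [pt_apply0, pt_apply1]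
          have hinner : ((p 0 + q 0) / 2 - ((p 0 + q 0) / 2 - σ * (q 1 - p 1) * (1 / (2 * Real.sqrt 3)))) ^ 2 +
              ((p 1 + q 1) / 2 - ((p 1 + q 1) / 2 + σ * (q 0 - p 0) * (1 / (2 * Real.sqrt 3)))) ^ 2
              = (r / Real.sqrt 3) ^ 2 := by
            have h13 : (r / Real.sqrt 3) ^ 2 = r ^ 2 / 3 := by rw [div_pow, hs3sq]
            rw [h13]
            linear_combination ((1 / (2 * Real.sqrt 3)) ^ 2 * ((q 0 - p 0) ^ 2 + (q 1 - p 1) ^ 2)) * hσ +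
              ((q 0 - p 0) ^ 2 + (q 1 - p 1) ^ 2) * hc2 + (1 / 12) * hu
          rw [hinner, Real.sqrt_sq (by positivity)]
        have htri := dist_triangle s
          (pt ((p 0 + q 0) / 2 - σ * (q 1 - p 1) * (1 / (2 * Real.sqrt 3)))
              ((p 1 + q 1) / 2 + σ * (q 0 - p 0) * (1 / (2 * Real.sqrt 3))))
          (pt ((p 0 + q 0) / 2) ((p 1 + q 1) / 2))
        have hcomm : dist (pt ((p 0 + q 0) / 2 - σ * (q 1 - p 1) * (1 / (2 * Real.sqrt 3)))
              ((p 1 + q 1) / 2 + σ * (q 0 - p 0) * (1 / (2 * Real.sqrt 3))))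
            (pt ((p 0 + q 0) / 2) ((p 1 + q 1) / 2)) = r / Real.sqrt 3 := by
          rw [dist_comm]; exact hmz
        have heq : Real.sqrt 3 * r - r / Real.sqrt 3 = 2 * r / Real.sqrt 3 := by
          field_simp
          linear_combination hs3sq
        rw [dist_comm]
        linarith [htri, hsm, hcomm, heq]

lemma fpi_ratio_le_two (k : ℕ) (hk : 2 ≤ k) (q : ℕ → E2) (hq : IsFPIOn unitSquare k q) :
    gapRatio unitSquare (fpiPrefix q k) ≤ 2 := by
  have hSfin : (fpiPrefix q k).Finite := (Set.finite_Iio k).image q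
  have hSsub : fpiPrefix q k ⊆ unitSquare := by
    rintro x ⟨j, hj, rfl⟩; exact hq.1 j hj
  have h0S : q 0 ∈ fpiPrefix q k := ⟨0, show 0 < k by omega, rfl⟩
  have h1S : q 1 ∈ fpiPrefix q k := ⟨1, show 1 < k by omega, rfl⟩
  have hSne : (fpiPrefix q k).Nonempty := ⟨q 0, h0S⟩
  have hRpos : 0 < maxGap unitSquare (fpiPrefix q k) := maxGap_pos hSfin hSne hSsub
  have hbdd : Bornology.IsBounded unitSquare :=
    Metric.isBounded_iff.2 ⟨2, fun x hx y hy => dist_le_two hx hy⟩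
  have hdiam : maxGap unitSquare (fpiPrefix q k) ≤ Metric.diam unitSquare := by
    apply maxGap_le
    intro z hz
    exact le_trans (infDist_le_dist_of_mem h0S)
      (dist_le_diam_of_mem hbdd hz (hSsub h0S))
  have hmemA : pt 0 0 ∈ unitSquare := by rw [mem_unitSquare_iff]; norm_num
  have hmemB : pt 1 1 ∈ unitSquare := by rw [mem_unitSquare_iff]; norm_num
  have hABpos : (0:ℝ) < dist (pt 0 0) (pt 1 1) := by
    rw [dist_eq2]
    simp only [pt_apply0, pt_apply1]
    rw [show ((0:ℝ) - 1) ^ 2 + ((0:ℝ) - 1) ^ 2 = 2 by norm_num]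
    positivity
  have hdiampos : (0:ℝ) < Metric.diam unitSquare :=
    lt_of_lt_of_le hABpos (dist_le_diam_of_mem hbdd hmemA hmemB)
  have hne01 : q 0 ≠ q 1 := by
    apply dist_pos.1
    rw [hq.2.1]; exact hdiampos
  have key : ∀ i j : ℕ, i < j → j < k →
      maxGap unitSquare (fpiPrefix q k) ≤ dist (q i) (q j) := by
    intro i j hij hjk
    rcases lt_or_ge j 2 with hj2 | hj2
    · have hi0 : i = 0 := by omega
      have hj1 : j = 1 := by omega
      subst hi0; subst hj1
      rw [hq.2.1]; exact hdiam
    · have hpre : q i ∈ fpiPrefix q j := ⟨i, hij, rfl⟩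
      have hprene : (fpiPrefix q j).Nonempty := ⟨q i, hpre⟩
      have hpresub : fpiPrefix q j ⊆ fpiPrefix q k := by
        rintro x ⟨a, ha, rfl⟩; exact ⟨a, lt_trans ha hjk, rfl⟩
      calc maxGap unitSquare (fpiPrefix q k)
          ≤ maxGap unitSquare (fpiPrefix q j) :=
            maxGap_anti hpresub hprene (hpresub.trans hSsub)
        _ = infDist (q j) (fpiPrefix q j) := (hq.2.2 j hj2 hjk).symm
        _ ≤ dist (q j) (q i) := infDist_le_dist_of_mem hpre
        _ = dist (q i) (q j) := dist_comm _ _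
  obtain ⟨_, hmin, hgap⟩ := minGap_spec hSfin h0S h1S hne01
  have hminR : maxGap unitSquare (fpiPrefix q k) ≤ 2 * minGap (fpiPrefix q k) := by
    have h2 : 2 * minGap (fpiPrefix q k) =
        sInf {d : ℝ | ∃ a ∈ fpiPrefix q k, ∃ b ∈ fpiPrefix q k, a ≠ b ∧ d = dist a b} := by
      rw [minGap]; ring
    rw [h2]
    apply le_csInf
    · exact ⟨dist (q 0) (q 1), q 0, h0S, q 1, h1S, hne01, rfl⟩
    · rintro d ⟨a, ⟨i, hi, rfl⟩, b, ⟨j, hj, rfl⟩, hab, rfl⟩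
      rcases lt_trichotomy i j with h | h | h
      · exact key i j h hj
      · exact absurd (by rw [h]) hab
      · rw [dist_comm]; exact key j i h hi
  rw [gapRatio, div_le_iff₀ hgap]
  linarith

lemma opt_ratio_ge (P : Set E2) (hPsub : P ⊆ unitSquare) (hfin : P.Finite)
    {p0 q0 : E2} (hp0 : p0 ∈ P) (hq0 : q0 ∈ P) (hne : p0 ≠ q0) :
    2 / Real.sqrt 3 ≤ gapRatio unitSquare P := by
  obtain ⟨⟨a, ha, b, hb, hab, hd⟩, hmin, hpos⟩ := minGap_spec hfin hp0 hq0 hne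
  obtain ⟨z, hzsq, hzd⟩ := deep_point hPsub ha hb hab hpos hd hmin
  obtain ⟨z', hz'sq, hz'd⟩ : ∃ z' : E2, z' ∈ unitSquare ∧
      ∀ s ∈ P, 2 * minGap P / Real.sqrt 3 ≤ dist z' s := ⟨z, hzsq, hzd⟩
  have hPne : P.Nonempty := ⟨p0, hp0⟩
  have h1 : 2 * minGap P / Real.sqrt 3 ≤ infDist z' P := le_infDist' hPne hz'd
  have h2 : infDist z' P ≤ maxGap unitSquare P := le_maxGap hPne hPsub hz'sq
  rw [gapRatio, le_div_iff₀ hpos]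
  have h3 : 2 / Real.sqrt 3 * minGap P = 2 * minGap P / Real.sqrt 3 := by ring
  linarith

/-- In the unit square, farthest-point insertion is a `ρ(k)`-approximation for the
optimal gap ratio, where `ρ(k) = 27^{1/4}·√k / (3^{1/4}·√k − √2)`. -/
theorem stmt10 (k : ℕ) (hk : 2 ≤ k)
    (hk2 : Real.sqrt 2 < (3:ℝ) ^ ((1:ℝ)/4) * Real.sqrt k)
    (q : ℕ → EuclideanSpace ℝ (Fin 2)) (hq : IsFPIOn unitSquare k q)
    (P : Set (EuclideanSpace ℝ (Fin 2))) (hPsub : P ⊆ unitSquare)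
    (hP : P.ncard = k) :
    gapRatio unitSquare (fpiPrefix q k) ≤
      ((27:ℝ) ^ ((1:ℝ)/4) * Real.sqrt k /
        ((3:ℝ) ^ ((1:ℝ)/4) * Real.sqrt k - Real.sqrt 2)) *
        gapRatio unitSquare P := by

  have hPfin : P.Finite := by
    by_contra hinf
    rw [Set.Infinite.ncard hinf] at hP
    omega
  have hcard : 1 < P.ncard := by omega
  obtain ⟨a, b, ha, hb, hab⟩ := (Set.one_lt_ncard_iff hPfin).1 hcard
  have hopt := opt_ratio_ge P hPsub hPfin ha hb hab
  have hfpi := fpi_ratio_le_two k hk q hq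
  have hs3pos : (0:ℝ) < Real.sqrt 3 := Real.sqrt_pos.2 (by norm_num)
  have hden : (0:ℝ) < (3:ℝ) ^ ((1:ℝ)/4) * Real.sqrt k - Real.sqrt 2 := by linarith
  have h27 : (27:ℝ) ^ ((1:ℝ)/4) = Real.sqrt 3 * (3:ℝ) ^ ((1:ℝ)/4) := by
    have h3 : (27:ℝ) = (3:ℝ) ^ (3:ℝ) := by
      rw [show (3:ℝ) = ((3:ℕ):ℝ) from by norm_num]
      rw [Real.rpow_natCast]
      norm_num
    rw [h3, ← Real.rpow_mul (by norm_num : (0:ℝ) ≤ 3), Real.sqrt_eq_rpow,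
      ← Real.rpow_add (by norm_num : (0:ℝ) < 3)]
    norm_num
  have hrho : Real.sqrt 3 ≤ (27:ℝ) ^ ((1:ℝ)/4) * Real.sqrt k /
      ((3:ℝ) ^ ((1:ℝ)/4) * Real.sqrt k - Real.sqrt 2) := by
    rw [h27, le_div_iff₀ hden]
    nlinarith [mul_nonneg hs3pos.le (Real.sqrt_nonneg 2)]
  have h2eq : (2:ℝ) = Real.sqrt 3 * (2 / Real.sqrt 3) := by field_simp
  calc gapRatio unitSquare (fpiPrefix q k) ≤ 2 := hfpi
    _ = Real.sqrt 3 * (2 / Real.sqrt 3) := h2eq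
    _ ≤ ((27:ℝ) ^ ((1:ℝ)/4) * Real.sqrt k /
        ((3:ℝ) ^ ((1:ℝ)/4) * Real.sqrt k - Real.sqrt 2)) * gapRatio unitSquare P :=
      mul_le_mul hrho hopt (by positivity) (le_trans hs3pos.le hrho)
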